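/- Let f(x) = ‖Ax-b‖₂² with spark(A) > K, and let {x^k} be generated by inexact IHT with L > 2λ_max(AᵀA) and errors satisfying Σ_{k≥0}‖ε^k‖² < ∞. Then the sequence {x^k} converges to an L-stationary point of the problem minimize ‖Ax-b‖₂² subject to ‖x‖₀ ≤ K. -/

import Mathlib

noncomputable section
set_option maxHeartbeats 1000000

/-- A vector is `K`-sparse if it has at most `K` nonzero entries. -/
def sparse {N : ℕ} (K : ℕ) (x : EuclideanSpace ℝ (Fin N)) : Prop :=
  (Finset.univ.filter fun i => x i ≠ 0).card ≤ K

/-- `IsHT K z x` means `x` is a result of hard thresholding `z`: a `K`-sparse vector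
closest to `z` (ties broken arbitrarily). -/
def IsHT {N : ℕ} (K : ℕ) (z x : EuclideanSpace ℝ (Fin N)) : Prop :=
  sparse K x ∧ ∀ v : EuclideanSpace ℝ (Fin N), sparse K v → ‖x - z‖ ≤ ‖v - z‖

namespace IHTAux

open Matrix Filter

abbrev EN (N : ℕ) := EuclideanSpace ℝ (Fin N)

variable {M N : ℕ}

lemma trans_adj (A : Matrix (Fin M) (Fin N) ℝ) :
    Matrix.toEuclideanLin Aᵀ = LinearMap.adjoint (Matrix.toEuclideanLin A) := by
  rw [← Matrix.conjTranspose_eq_transpose_of_trivial,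
    Matrix.toEuclideanLin_conjTranspose_eq_adjoint]

lemma ata_apply (A : Matrix (Fin M) (Fin N) ℝ) (u : EN N) :
    Matrix.toEuclideanLin (Aᵀ * A) u
      = (Matrix.toEuclideanLin Aᵀ) (Matrix.toEuclideanLin A u) := by
  simp [Matrix.toEuclideanLin_apply, Matrix.mulVec_mulVec]

lemma inner_ata (A : Matrix (Fin M) (Fin N) ℝ) (u v : EN N) :
    @inner ℝ _ _ (Matrix.toEuclideanLin (Aᵀ * A) u) v
      = @inner ℝ _ _ (Matrix.toEuclideanLin A u) (Matrix.toEuclideanLin A v) := by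
  rw [ata_apply, trans_adj]
  exact LinearMap.adjoint_inner_left _ _ _

lemma grad_formula (A : Matrix (Fin M) (Fin N) ℝ) (b : EuclideanSpace ℝ (Fin M))
    (x : EN N) :
    HasGradientAt (fun y => ‖Matrix.toEuclideanLin A y - b‖ ^ 2)
      ((2:ℝ) • (Matrix.toEuclideanLin Aᵀ) (Matrix.toEuclideanLin A x - b)) x := by
  classical
  set B : EN N →L[ℝ] EuclideanSpace ℝ (Fin M) :=
    LinearMap.toContinuousLinearMap (Matrix.toEuclideanLin A) with hB
  have hBapp : ∀ y, (Matrix.toEuclideanLin A) y = B y := fun y => rfl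
  have hf : HasFDerivAt (fun y : EN N => B y - b) B x := by
    simpa using (B.hasFDerivAt (x := x)).sub_const b
  have h1 : HasFDerivAt (fun y : EN N => @inner ℝ _ _ (B y - b) (B y - b))
      ((fderivInnerCLM ℝ (B x - b, B x - b)).comp (B.prod B)) x := hf.inner ℝ hf
  rw [hasGradientAt_iff_hasFDerivAt]
  have heq : (InnerProductSpace.toDual ℝ (EN N))
        ((2:ℝ) • (Matrix.toEuclideanLin Aᵀ) (Matrix.toEuclideanLin A x - b))
      = (fderivInnerCLM ℝ (B x - b, B x - b)).comp (B.prod B) := by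
    ext h
    rw [InnerProductSpace.toDual_apply_apply]
    have : (fderivInnerCLM (𝕜 := ℝ) (E := EuclideanSpace ℝ (Fin M)) (B x - b, B x - b)).comp
        (B.prod B) h = @inner ℝ _ _ (B x - b) (B h) + @inner ℝ _ _ (B h) (B x - b) := by
      simp [fderivInnerCLM_apply]
    rw [this, trans_adj, real_inner_smul_left]
    have hadj : @inner ℝ _ _ ((LinearMap.adjoint (Matrix.toEuclideanLin A))
        (Matrix.toEuclideanLin A x - b)) h
        = @inner ℝ _ _ (Matrix.toEuclideanLin A x - b) (Matrix.toEuclideanLin A h) :=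
      LinearMap.adjoint_inner_left _ _ _
    rw [hadj, hBapp, hBapp, real_inner_comm (B h) (B x - b)]
    ring
  have hfun : (fun y : EN N => ‖Matrix.toEuclideanLin A y - b‖ ^ 2)
      = fun y => @inner ℝ _ _ (B y - b) (B y - b) := by
    funext y; rw [real_inner_self_eq_norm_sq, hBapp]
  rw [hfun, heq]
  exact h1

lemma grad_eq (A : Matrix (Fin M) (Fin N) ℝ) (b : EuclideanSpace ℝ (Fin M)) (x : EN N) :
    gradient (fun y => ‖Matrix.toEuclideanLin A y - b‖ ^ 2) x
      = (2:ℝ) • (Matrix.toEuclideanLin Aᵀ) (Matrix.toEuclideanLin A x - b) :=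
  (grad_formula A b x).gradient

lemma quad_expand (A : Matrix (Fin M) (Fin N) ℝ) (b : EuclideanSpace ℝ (Fin M))
    (u v : EN N) :
    ‖Matrix.toEuclideanLin A v - b‖ ^ 2
      = ‖Matrix.toEuclideanLin A u - b‖ ^ 2
        + @inner ℝ _ _ ((2:ℝ) • (Matrix.toEuclideanLin Aᵀ) (Matrix.toEuclideanLin A u - b)) (v - u)
        + ‖Matrix.toEuclideanLin A (v - u)‖ ^ 2 := by
  have h1 : Matrix.toEuclideanLin A v - b
      = (Matrix.toEuclideanLin A u - b) + Matrix.toEuclideanLin A (v - u) := by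
    rw [map_sub]; abel
  rw [h1, norm_add_sq_real, real_inner_smul_left, trans_adj,
    LinearMap.adjoint_inner_left]
  try ring

lemma rayleigh_bound (A : Matrix (Fin M) (Fin N) ℝ) (lam : ℝ)
    (hlam : IsGreatest
      {μ : ℝ | Module.End.HasEigenvalue (Matrix.toEuclideanLin (Aᵀ * A)) μ} lam)
    (u : EN N) :
    ‖Matrix.toEuclideanLin A u‖ ^ 2 ≤ lam * ‖u‖ ^ 2 := by
  rcases subsingleton_or_nontrivial (EN N) with h | h
  · exact absurd (Subsingleton.elim _ _) hlam.1
  · set T := Matrix.toEuclideanLin (Aᵀ * A) with hT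
    have hsymm : T.IsSymmetric := by
      intro a c
      rw [inner_ata, ← LinearMap.adjoint_inner_right, ← trans_adj, ← ata_apply]
    set B : EN N →L[ℝ] EuclideanSpace ℝ (Fin M) :=
      LinearMap.toContinuousLinearMap (Matrix.toEuclideanLin A) with hB
    have hBapp : ∀ y, (Matrix.toEuclideanLin A) y = B y := fun y => rfl
    have hRq : ∀ w : EN N, @inner ℝ _ _ (T w) w = ‖Matrix.toEuclideanLin A w‖ ^ 2 := by
      intro w; rw [inner_ata, real_inner_self_eq_norm_sq]
    have hbdd : BddAbove (Set.range fun w : {w : EN N // w ≠ 0} =>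
        RCLike.re (@inner ℝ _ _ (T w.1) w.1) / ‖(w : EN N)‖ ^ 2) := by
      refine ⟨‖B‖ ^ 2, ?_⟩
      rintro _ ⟨w, rfl⟩
      have hw : (0:ℝ) < ‖(w : EN N)‖ ^ 2 := pow_pos (norm_pos_iff.mpr w.2) 2
      rw [div_le_iff₀ hw]
      have := hRq w.1
      simp only [RCLike.re_to_real, this, hBapp]
      calc ‖B w.1‖ ^ 2 ≤ (‖B‖ * ‖w.1‖) ^ 2 := by
            have := B.le_opNorm w.1
            nlinarith [norm_nonneg (B w.1), norm_nonneg w.1, B.opNorm_nonneg]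
        _ = ‖B‖ ^ 2 * ‖w.1‖ ^ 2 := by ring
    have hev := hsymm.hasEigenvalue_iSup_of_finiteDimensional
    have hle : (⨆ w : {w : EN N // w ≠ 0},
        RCLike.re (@inner ℝ _ _ (T w.1) w.1) / ‖(w : EN N)‖ ^ 2) ≤ lam :=
      hlam.2 hev
    rcases eq_or_ne u 0 with rfl | hu
    · simp
    · have h1 : ‖Matrix.toEuclideanLin A u‖ ^ 2 / ‖u‖ ^ 2 ≤ lam := by
        refine le_trans ?_ hle
        have := le_ciSup hbdd ⟨u, hu⟩
        simpa [hRq] using this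
      have hw : (0:ℝ) < ‖u‖ ^ 2 := pow_pos (norm_pos_iff.mpr hu) 2
      calc ‖Matrix.toEuclideanLin A u‖ ^ 2 = ‖Matrix.toEuclideanLin A u‖ ^ 2 / ‖u‖^2 * ‖u‖^2 := by
            field_simp
        _ ≤ lam * ‖u‖ ^ 2 := by nlinarith

lemma sparse_smul {K : ℕ} (c : ℝ) {u : EN N} (hu : sparse K u) : sparse K (c • u) := by
  refine le_trans (Finset.card_le_card ?_) hu
  intro i hi
  simp only [Finset.mem_filter, Finset.mem_univ, true_and] at hi ⊢
  intro h0
  exact hi (by simp [PiLp.smul_apply, h0])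

lemma coord_isClosed (i : Fin N) : IsClosed {u : EN N | u i = 0} := by
  have : {u : EN N | u i = 0} = (EuclideanSpace.proj (𝕜 := ℝ) i) ⁻¹' {0} := rfl
  rw [this]
  exact IsClosed.preimage (EuclideanSpace.proj (𝕜 := ℝ) i).continuous isClosed_singleton

lemma sparse_isClosed (K : ℕ) : IsClosed {u : EN N | sparse K u} := by
  classical
  have : {u : EN N | sparse K u} =
      ⋃ S ∈ {S : Finset (Fin N) | S.card ≤ K}, {u : EN N | ∀ i ∉ S, u i = 0} := by
    ext u
    simp only [Set.mem_setOf_eq, Set.mem_iUnion]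
    constructor
    · intro hu
      refine ⟨Finset.univ.filter fun i => u i ≠ 0, hu, fun i hi => ?_⟩
      by_contra h
      exact hi (Finset.mem_filter.2 ⟨Finset.mem_univ _, h⟩)
    · rintro ⟨S, hS, hu⟩
      refine le_trans (Finset.card_le_card ?_) hS
      intro i hi
      simp only [Finset.mem_filter, Finset.mem_univ, true_and] at hi
      by_contra h
      exact hi (hu i h)
  rw [this]
  refine Set.Finite.isClosed_biUnion (Set.toFinite _) fun S _ => ?_
  have : {u : EN N | ∀ i ∉ S, u i = 0} = ⋂ i ∈ {i | i ∉ S}, {u : EN N | u i = 0} := by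
    ext u; simp
  rw [this]
  exact isClosed_biInter fun i _ => coord_isClosed i

lemma sparse_inj {K : ℕ} (A : Matrix (Fin M) (Fin N) ℝ)
    (hspark : ∀ S : Finset (Fin N), S.card ≤ K →
      LinearIndependent ℝ (fun j : S => Aᵀ (j : Fin N)))
    {u : EN N} (hu : sparse K u) (h0 : Matrix.toEuclideanLin A u = 0) : u = 0 := by
  classical
  set S := Finset.univ.filter fun i => u i ≠ 0 with hS
  have hli := hspark S hu
  have hzero : ∀ j : S, u (j : Fin N) = 0 := by
    rw [Fintype.linearIndependent_iff] at hli
    refine hli (fun j => u (j : Fin N)) ?_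
    funext m
    have h0m : (Matrix.toEuclideanLin A u) m = 0 := by rw [h0]; rfl
    rw [Matrix.toEuclideanLin_apply] at h0m
    have hmv : ∑ j, A m j * u j = 0 := h0m
    simp only [Finset.sum_apply, Pi.smul_apply, smul_eq_mul, Pi.zero_apply,
      Matrix.transpose_apply]
    have e1 : ∑ j : S, u (j : Fin N) * A m (j : Fin N)
        = ∑ j ∈ S, u j * A m j := Finset.sum_coe_sort S (fun j => u j * A m j)
    rw [e1]
    rw [Finset.sum_subset (Finset.subset_univ S)]
    · rw [← hmv]
      exact Finset.sum_congr rfl fun j _ => mul_comm _ _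
    · intro j _ hj
      rw [hS] at hj
      simp only [Finset.mem_filter, Finset.mem_univ, true_and, not_not] at hj
      rw [hj, zero_mul]
  ext i
  by_cases hi : u i = 0
  · exact hi
  · exact hzero ⟨i, by simp [hS, hi]⟩

lemma sparse_lower {K : ℕ} (A : Matrix (Fin M) (Fin N) ℝ)
    (hspark : ∀ S : Finset (Fin N), S.card ≤ K →
      LinearIndependent ℝ (fun j : S => Aᵀ (j : Fin N))) :
    ∃ α > (0:ℝ), ∀ u : EN N, sparse K u → α * ‖u‖ ≤ ‖Matrix.toEuclideanLin A u‖ := by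
  classical
  set B : EN N →L[ℝ] EuclideanSpace ℝ (Fin M) :=
    LinearMap.toContinuousLinearMap (Matrix.toEuclideanLin A) with hB
  have hBapp : ∀ y, (Matrix.toEuclideanLin A) y = B y := fun y => rfl
  set C : Set (EN N) := {u | sparse K u} ∩ Metric.sphere 0 1 with hC
  have hCcpt : IsCompact C := ((isCompact_sphere (0 : EN N) 1).inter_left (sparse_isClosed K))
  rcases C.eq_empty_or_nonempty with hemp | hne
  · refine ⟨1, one_pos, fun u hu => ?_⟩
    rcases eq_or_ne u 0 with rfl | hu0
    · simp
    · exfalso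
      have hmem : (‖u‖⁻¹ • u) ∈ C := by
        constructor
        · exact sparse_smul _ hu
        · simp [norm_smul, norm_ne_zero_iff.2 hu0, inv_mul_cancel₀ (norm_ne_zero_iff.2 hu0)]
      rw [hemp] at hmem
      exact hmem
  · obtain ⟨u₀, hu₀C, hmin⟩ := hCcpt.exists_isMinOn hne (by fun_prop :
      Continuous fun u : EN N => ‖B u‖).continuousOn
    have hu₀s : sparse K u₀ := hu₀C.1
    have hu₀n : ‖u₀‖ = 1 := by simpa using hu₀C.2
    have hα : 0 < ‖B u₀‖ := by
      rw [norm_pos_iff]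
      intro h
      have := sparse_inj A hspark hu₀s (by rw [hBapp]; exact h)
      rw [this] at hu₀n
      simp at hu₀n
    refine ⟨‖B u₀‖, hα, fun u hu => ?_⟩
    rcases eq_or_ne u 0 with rfl | hu0
    · simp
    · have hmem : (‖u‖⁻¹ • u) ∈ C := by
        constructor
        · exact sparse_smul _ hu
        · simp [norm_smul, inv_mul_cancel₀ (norm_ne_zero_iff.2 hu0)]
      have := hmin hmem
      simp only [Set.mem_setOf_eq] at this
      have h2 : ‖B (‖u‖⁻¹ • u)‖ = ‖u‖⁻¹ * ‖B u‖ := by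
        rw [_root_.map_smul, norm_smul]
        simp
      rw [h2] at this
      have hn : 0 < ‖u‖ := norm_pos_iff.2 hu0
      rw [hBapp]
      calc ‖B u₀‖ * ‖u‖ ≤ (‖u‖⁻¹ * ‖B u‖) * ‖u‖ := by nlinarith
        _ = ‖B u‖ := by field_simp

lemma stat_finite {K : ℕ} (A : Matrix (Fin M) (Fin N) ℝ) (b : EuclideanSpace ℝ (Fin M))
    (hspark : ∀ S : Finset (Fin N), S.card ≤ K →
      LinearIndependent ℝ (fun j : S => Aᵀ (j : Fin N))) :
    Set.Finite {y : EN N | sparse K y ∧ ∀ i, y i ≠ 0 →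
      (Matrix.toEuclideanLin Aᵀ) ((Matrix.toEuclideanLin A) y - b) i = 0} := by
  classical
  set G : EN N → EN N := fun y => (Matrix.toEuclideanLin Aᵀ) ((Matrix.toEuclideanLin A) y - b)
    with hG
  set Q : Finset (Fin N) → Set (EN N) :=
    fun S => {y | (∀ i ∉ S, y i = 0) ∧ ∀ i ∈ S, G y i = 0} with hQ
  have hsub : {y : EN N | sparse K y ∧ ∀ i, y i ≠ 0 → G y i = 0}
      ⊆ ⋃ S ∈ {S : Finset (Fin N) | S.card ≤ K}, Q S := by
    rintro y ⟨hy, hgrad⟩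
    refine Set.mem_biUnion (show (Finset.univ.filter fun i => y i ≠ 0) ∈
      {S : Finset (Fin N) | S.card ≤ K} from hy) ?_
    constructor
    · intro i hi
      by_contra h
      exact hi (Finset.mem_filter.2 ⟨Finset.mem_univ _, h⟩)
    · intro i hi
      exact hgrad i (Finset.mem_filter.1 hi).2
  refine Set.Finite.subset (Set.Finite.biUnion (Set.toFinite _) fun S hS => ?_) hsub
  refine Set.Subsingleton.finite ?_
  intro y hy z hz
  set u : EN N := y - z with hu
  have husupp : ∀ i ∉ S, u i = 0 := fun i hi => by
    simp only [hu, PiLp.sub_apply, hy.1 i hi, hz.1 i hi, sub_zero]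
  have husparse : sparse K u := by
    refine le_trans (Finset.card_le_card ?_) hS
    intro i hi
    simp only [Finset.mem_filter, Finset.mem_univ, true_and] at hi
    by_contra h
    exact hi (husupp i h)
  have hGu : ∀ i ∈ S, (Matrix.toEuclideanLin Aᵀ) ((Matrix.toEuclideanLin A) u) i = 0 := by
    intro i hi
    have : (Matrix.toEuclideanLin Aᵀ) ((Matrix.toEuclideanLin A) u)
        = G y - G z := by
      simp only [hG, hu, map_sub]
      abel
    rw [this]
    simp [hy.2 i hi, hz.2 i hi]
  have hinner : @inner ℝ _ _ ((Matrix.toEuclideanLin Aᵀ) ((Matrix.toEuclideanLin A) u)) u = 0 := by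
    rw [PiLp.inner_apply]
    refine Finset.sum_eq_zero fun i _ => ?_
    by_cases hi : i ∈ S
    · simp [hGu i hi]
    · simp [husupp i hi]
  have hAu : Matrix.toEuclideanLin A u = 0 := by
    have h1 : @inner ℝ _ _ (Matrix.toEuclideanLin A u) (Matrix.toEuclideanLin A u) = 0 := by
      rw [← hinner, ← Matrix.conjTranspose_eq_transpose_of_trivial,
        Matrix.toEuclideanLin_conjTranspose_eq_adjoint, LinearMap.adjoint_inner_left]
    exact inner_self_eq_zero.1 h1
  have := sparse_inj A hspark husparse hAu
  rw [hu, sub_eq_zero] at this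
  exact this

/-- accumulation points via subsequences -/
def ACCpts (x : ℕ → EN N) : Set (EN N) :=
  {y | ∃ φ : ℕ → ℕ, StrictMono φ ∧ Tendsto (x ∘ φ) atTop (nhds y)}

lemma acc_nonempty {x : ℕ → EN N} {R : ℝ} (hbd : ∀ k, ‖x k‖ ≤ R) : (ACCpts x).Nonempty := by
  have hb : Bornology.IsBounded (Metric.closedBall (0:EN N) R) := Metric.isBounded_closedBall
  have hx : ∀ k, x k ∈ Metric.closedBall (0:EN N) R := fun k => by
    simpa [Metric.mem_closedBall, dist_eq_norm] using hbd k
  obtain ⟨a, _, φ, hφ, hconv⟩ := tendsto_subseq_of_bounded hb hx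
  exact ⟨a, φ, hφ, hconv⟩

lemma acc_subseq {x : ℕ → EN N} {R : ℝ} (hbd : ∀ k, ‖x k‖ ≤ R) {φ : ℕ → ℕ}
    (hφ : StrictMono φ) : ∃ y ∈ ACCpts x, ∃ ψ : ℕ → ℕ, StrictMono ψ ∧
      Tendsto (x ∘ φ ∘ ψ) atTop (nhds y) := by
  have hb : Bornology.IsBounded (Metric.closedBall (0:EN N) R) := Metric.isBounded_closedBall
  have hx : ∀ k, (x ∘ φ) k ∈ Metric.closedBall (0:EN N) R := fun k => by
    simpa [Metric.mem_closedBall, dist_eq_norm] using hbd (φ k)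
  obtain ⟨a, _, ψ, hψ, hconv⟩ := tendsto_subseq_of_bounded hb hx
  exact ⟨a, ⟨φ ∘ ψ, hφ.comp hψ, hconv⟩, ψ, hψ, hconv⟩

lemma acc_eventually_close {x : ℕ → EN N} {R : ℝ} (hbd : ∀ k, ‖x k‖ ≤ R) {η : ℝ} (hη : 0 < η) :
    ∀ᶠ k in atTop, ∃ p ∈ ACCpts x, dist (x k) p < η := by
  by_contra h
  rw [not_eventually] at h
  have h' : ∃ᶠ k in atTop, ∀ p ∈ ACCpts x, η ≤ dist (x k) p := by
    refine h.mono fun k hk => ?_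
    push_neg at hk
    exact hk
  obtain ⟨φ, hφ, hfar⟩ := extraction_of_frequently_atTop h'
  obtain ⟨y, hy, ψ, hψ, hconv⟩ := acc_subseq hbd hφ
  have hlim : Tendsto (fun n => dist (x (φ (ψ n))) y) atTop (nhds 0) := by
    simpa [Function.comp, dist_eq_norm] using
      tendsto_iff_dist_tendsto_zero.1 hconv
  have : ∀ n, η ≤ dist (x (φ (ψ n))) y := fun n => hfar (ψ n) y hy
  have := ge_of_tendsto hlim (Eventually.of_forall this)
  linarith

lemma finite_sep {P : Set (EN N)} (hP : P.Finite) :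
    ∃ δ > (0:ℝ), ∀ p ∈ P, ∀ q ∈ P, p ≠ q → δ ≤ dist p q := by
  classical
  set D : Set ℝ := (fun pq : EN N × EN N => dist pq.1 pq.2) '' ((P ×ˢ P) ∩ {pq | pq.1 ≠ pq.2})
  have hD : D.Finite := Set.Finite.image _ ((hP.prod hP).inter_of_left _)
  rcases D.eq_empty_or_nonempty with hemp | hne
  · refine ⟨1, one_pos, fun p hp q hq hpq => ?_⟩
    exfalso
    have : dist p q ∈ D := ⟨(p, q), ⟨⟨hp, hq⟩, hpq⟩, rfl⟩
    rw [hemp] at this; exact this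
  · obtain ⟨d₀, hd₀D, hmin⟩ : ∃ a ∈ D, ∀ a' ∈ D, id a' ≤ id a → id a = id a' := by
      obtain ⟨a, ha, h⟩ := D.exists_min_image id hD hne
      exact ⟨a, ha, fun a' ha' h' => le_antisymm (h a' ha') h'⟩
    obtain ⟨⟨p, q⟩, ⟨⟨hp, hq⟩, hpq⟩, rfl⟩ := hd₀D
    refine ⟨dist p q, dist_pos.2 hpq, fun a ha c hc hac => ?_⟩
    have : dist a c ∈ D := ⟨(a, c), ⟨⟨ha, hc⟩, hac⟩, rfl⟩
    by_contra hlt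
    push_neg at hlt
    have := hmin (dist a c) this (le_of_lt hlt)
    simp only [id] at this
    linarith

lemma tendsto_of_acc_finite {x : ℕ → EN N} {R : ℝ} (hbd : ∀ k, ‖x k‖ ≤ R)
    (hstep : Tendsto (fun k => dist (x (k+1)) (x k)) atTop (nhds 0))
    (hfin : (ACCpts x).Finite) :
    ∃ a ∈ ACCpts x, Tendsto x atTop (nhds a) := by
  classical
  obtain ⟨δ, hδ, hsep⟩ := finite_sep hfin
  obtain ⟨a₀, ha₀⟩ := acc_nonempty hbd
  have h1 : ∀ᶠ k in atTop, ∃ p ∈ ACCpts x, dist (x k) p < δ/3 :=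
    acc_eventually_close hbd (by linarith)
  have h2 : ∀ᶠ k in atTop, dist (x (k+1)) (x k) < δ/3 := by
    have := Metric.tendsto_atTop.1 hstep (δ/3) (by linarith)
    obtain ⟨K, hK⟩ := this
    exact eventually_atTop.2 ⟨K, fun k hk => by
      have := hK k hk
      rw [Real.dist_eq] at this
      have h0 : (0:ℝ) ≤ dist (x (k+1)) (x k) := dist_nonneg
      calc dist (x (k+1)) (x k) = |dist (x (k+1)) (x k) - 0| := by
            rw [sub_zero, abs_of_nonneg h0]
        _ < δ/3 := this⟩
  obtain ⟨K₀, hK₀⟩ := eventually_atTop.1 (h1.and h2)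
  have hch : ∀ k, ∃ p, p ∈ ACCpts x ∧ (K₀ ≤ k → dist (x k) p < δ/3) := by
    intro k
    by_cases hk : K₀ ≤ k
    · obtain ⟨p, hp, hd⟩ := (hK₀ k hk).1
      exact ⟨p, hp, fun _ => hd⟩
    · exact ⟨a₀, ha₀, fun h => absurd h hk⟩
  choose p hpacc hpd using hch
  have hconst : ∀ k, K₀ ≤ k → p k = p K₀ := by
    intro k hk
    induction k, hk using Nat.le_induction with
    | base => rfl
    | succ k hk ih =>
      have hkk : dist (p (k+1)) (p k) < δ := by
        have d1 : dist (x (k+1)) (p (k+1)) < δ/3 := hpd (k+1) (by omega)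
        have d2 : dist (x k) (p k) < δ/3 := hpd k hk
        have d3 : dist (x (k+1)) (x k) < δ/3 := (hK₀ k hk).2
        calc dist (p (k+1)) (p k)
            ≤ dist (p (k+1)) (x (k+1)) + dist (x (k+1)) (x k) + dist (x k) (p k) :=
              dist_triangle4 _ _ _ _
          _ < δ/3 + δ/3 + δ/3 := by
              rw [dist_comm (p (k+1)) (x (k+1))]; linarith
          _ = δ := by ring
      by_contra hne
      have := hsep _ (hpacc (k+1)) _ (hpacc k) (fun h => hne (h.trans ih))
      linarith
  set a := p K₀ with ha
  have hacc_eq : ∀ b ∈ ACCpts x, b = a := by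
    intro b hb
    obtain ⟨φ, hφ, hconv⟩ := id hb
    have hfreq : ∃ᶠ k in atTop, dist (x k) b < δ/3 := by
      have : ∀ᶠ n in atTop, dist (x (φ n)) b < δ/3 := by
        have := Metric.tendsto_atTop.1 hconv (δ/3) (by linarith)
        obtain ⟨K, hK⟩ := this
        exact eventually_atTop.2 ⟨K, fun n hn => hK n hn⟩
      exact hφ.tendsto_atTop.frequently this.frequently
    obtain ⟨k, hk1, hk2⟩ := (hfreq.and_eventually (eventually_ge_atTop K₀)).exists
    have hd : dist b a < δ := by
      have d1 : dist (x k) (p k) < δ/3 := hpd k hk2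
      have : p k = a := hconst k hk2
      rw [this] at d1
      calc dist b a ≤ dist b (x k) + dist (x k) a := dist_triangle _ _ _
        _ < δ/3 + δ/3 := by rw [dist_comm b (x k)]; linarith
        _ < δ := by linarith
    by_contra hne
    exact absurd hd (not_lt.2 (hsep _ hb _ (hpacc K₀) hne))
  refine ⟨a, hpacc K₀, Metric.tendsto_atTop.2 fun η hη => ?_⟩
  have := acc_eventually_close hbd hη
  obtain ⟨K, hK⟩ := eventually_atTop.1 this
  refine ⟨K, fun k hk => ?_⟩
  obtain ⟨q, hq, hdq⟩ := hK k hk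
  rw [hacc_eq q hq] at hdq
  exact hdq

lemma ht_fixed_coord {K : ℕ} {z y : EN N} (h : IsHT K z y) {i : Fin N} (hi : y i ≠ 0) :
    y i = z i := by
  classical
  set t : ℝ := y i - z i with ht
  set v : EN N := y - t • EuclideanSpace.single i (1:ℝ) with hv
  have hvs : sparse K v := by
    refine le_trans (Finset.card_le_card ?_) h.1
    intro j hj
    simp only [Finset.mem_filter, Finset.mem_univ, true_and] at hj ⊢
    by_cases hij : j = i
    · subst hij; exact hi
    · intro h0
      refine hj ?_
      simp [hv, EuclideanSpace.single_apply, hij, h0]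
  have hnorm : ‖v - z‖ ^ 2 = ‖y - z‖ ^ 2 - t ^ 2 := by
    have hvz : v - z = (y - z) - t • EuclideanSpace.single i (1:ℝ) := by
      rw [hv]; abel
    rw [hvz, norm_sub_sq_real]
    have hinner : @inner ℝ _ _ (y - z) (t • EuclideanSpace.single i (1:ℝ)) = t * t := by
      rw [real_inner_smul_right]
      have : @inner ℝ _ _ (y - z) (EuclideanSpace.single i (1:ℝ)) = (y - z) i := by
        rw [real_inner_comm, EuclideanSpace.inner_single_left]
        simp
      rw [this]
      simp [ht]
    have hns : ‖t • EuclideanSpace.single i (1:ℝ)‖ ^ 2 = t ^ 2 := by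
      rw [norm_smul, mul_pow, EuclideanSpace.norm_single]
      simp [abs_sq, sq_abs]
    rw [hinner, hns]
    ring
  have hle := h.2 v hvs
  have hle2 : ‖y - z‖ ^ 2 ≤ ‖v - z‖ ^ 2 := by
    have := pow_le_pow_left₀ (norm_nonneg _) hle 2
    exact this
  rw [hnorm] at hle2
  have : t ^ 2 ≤ 0 := by linarith
  have ht0 : t = 0 := by nlinarith [sq_nonneg t]
  rw [ht] at ht0
  linarith

theorem main {M N : ℕ} (A : Matrix (Fin M) (Fin N) ℝ) (b : EuclideanSpace ℝ (Fin M))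
    (K : ℕ)
    (hspark : ∀ S : Finset (Fin N), S.card ≤ K →
      LinearIndependent ℝ (fun j : S => Aᵀ (j : Fin N)))
    (lam L : ℝ)
    (hlam : IsGreatest
      {μ : ℝ | Module.End.HasEigenvalue (Matrix.toEuclideanLin (Aᵀ * A)) μ} lam)
    (hL : 2 * lam < L)
    (x ε : ℕ → EuclideanSpace ℝ (Fin N))
    (h0 : sparse K (x 0))
    (hit : ∀ k, IsHT K
      (x k - (1 / L) •
        (gradient (fun y => ‖Matrix.toEuclideanLin A y - b‖ ^ 2) (x k) + ε k))
      (x (k + 1)))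
    (hsum : Summable fun k => ‖ε k‖ ^ 2) :
    ∃ xstar : EuclideanSpace ℝ (Fin N),
      Filter.Tendsto x Filter.atTop (nhds xstar) ∧
      IsHT K (xstar - (1 / L) •
        gradient (fun y => ‖Matrix.toEuclideanLin A y - b‖ ^ 2) xstar) xstar := by
  classical
  set g : EN N → EN N :=
    fun y => (2:ℝ) • (Matrix.toEuclideanLin Aᵀ) (Matrix.toEuclideanLin A y - b) with hg
  have hgr : ∀ y, gradient (fun y => ‖Matrix.toEuclideanLin A y - b‖ ^ 2) y = g y :=
    fun y => grad_eq A b y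
  simp only [hgr] at hit
  set f : EN N → ℝ := fun y => ‖Matrix.toEuclideanLin A y - b‖ ^ 2 with hf
  -- positivity of lam and L
  have hlam0 : 0 ≤ lam := by
    obtain ⟨v, hv⟩ := hlam.1.exists_hasEigenvector
    have h1 : Matrix.toEuclideanLin (Aᵀ * A) v = lam • v := hv.apply_eq_smul
    have h2 : @inner ℝ _ _ (Matrix.toEuclideanLin (Aᵀ * A) v) v
        = ‖Matrix.toEuclideanLin A v‖ ^ 2 := by
      rw [inner_ata, real_inner_self_eq_norm_sq]
    rw [h1, real_inner_smul_left, real_inner_self_eq_norm_sq] at h2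
    have hv0 : 0 < ‖v‖ ^ 2 := pow_pos (norm_pos_iff.2 hv.2) 2
    nlinarith [sq_nonneg ‖Matrix.toEuclideanLin A v‖]
  have hL0 : 0 < L := by linarith
  set c : ℝ := L / 2 - lam with hcdef
  have hc : 0 < c := by rw [hcdef]; linarith
  -- sparsity of all iterates
  have hxs : ∀ k, sparse K (x k) := by
    intro k
    cases k with
    | zero => exact h0
    | succ n => exact (hit n).1
  -- key inner product inequality from the HT step
  have hkey : ∀ k, @inner ℝ _ _ (g (x k)) (x (k+1) - x k)
      ≤ -(L/2) * ‖x (k+1) - x k‖^2 + ‖ε k‖ * ‖x (k+1) - x k‖ := by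
    intro k
    set d : EN N := x (k+1) - x k with hd
    set w : EN N := g (x k) + ε k with hw
    have h1 : ‖x (k+1) - (x k - (1/L) • w)‖ ≤ ‖x k - (x k - (1/L) • w)‖ :=
      (hit k).2 (x k) (hxs k)
    have e1 : x (k+1) - (x k - (1/L) • w) = d + (1/L) • w := by rw [hd]; abel
    have e2 : x k - (x k - (1/L) • w) = (1/L) • w := by abel
    rw [e1, e2] at h1
    have h2 : ‖d + (1/L) • w‖^2 ≤ ‖(1/L) • w‖^2 := pow_le_pow_left₀ (norm_nonneg _) h1 2
    rw [norm_add_sq_real] at h2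
    have h3 : ‖d‖^2 + 2 * @inner ℝ _ _ d ((1/L) • w) ≤ 0 := by linarith
    rw [real_inner_smul_right] at h3
    have h3' : L * (‖d‖^2 + 2 * ((1/L) * @inner ℝ _ _ d w)) ≤ 0 := by
      have := mul_le_mul_of_nonneg_left h3 hL0.le
      simpa using this
    have hLne : L ≠ 0 := ne_of_gt hL0
    have h4 : @inner ℝ _ _ d w ≤ -(L/2) * ‖d‖^2 := by
      have hexp : L * (‖d‖^2 + 2 * ((1/L) * @inner ℝ _ _ d w))
          = L * ‖d‖^2 + 2 * @inner ℝ _ _ d w := by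
        field_simp
      rw [hexp] at h3'
      linarith
    have h5 : @inner ℝ _ _ d w = @inner ℝ _ _ (g (x k)) d + @inner ℝ _ _ (ε k) d := by
      rw [hw, inner_add_right, real_inner_comm d (g (x k)), real_inner_comm d (ε k)]
    have h6 : -@inner ℝ _ _ (ε k) d ≤ ‖ε k‖ * ‖d‖ := by
      have := abs_real_inner_le_norm (ε k) d
      have h7 := neg_abs_le (@inner ℝ _ _ (ε k) d)
      linarith
    linarith [h4, h5, h6]
  -- sufficient decrease
  have hdec : ∀ k, f (x (k+1)) + (c/2) * ‖x (k+1) - x k‖^2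
      ≤ f (x k) + (1/(2*c)) * ‖ε k‖^2 := by
    intro k
    have hq := quad_expand A b (x k) (x (k+1))
    have hr := rayleigh_bound A lam hlam (x (k+1) - x k)
    have hk := hkey k
    have hamgm : ‖ε k‖ * ‖x (k+1) - x k‖
        ≤ c/2 * ‖x (k+1) - x k‖^2 + 1/(2*c) * ‖ε k‖^2 := by
      have hsq := sq_nonneg (c * ‖x (k+1) - x k‖ - ‖ε k‖)
      have h2c : (0:ℝ) < 2*c := by linarith
      rw [← sub_nonneg]
      have hid : c/2 * ‖x (k+1) - x k‖^2 + 1/(2*c) * ‖ε k‖^2 - ‖ε k‖ * ‖x (k+1) - x k‖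
          = (c * ‖x (k+1) - x k‖ - ‖ε k‖)^2 / (2*c) := by
        field_simp
        ring
      rw [hid]
      positivity
    have hfid : f (x (k+1)) = f (x k) + @inner ℝ _ _ (g (x k)) (x (k+1) - x k)
        + ‖Matrix.toEuclideanLin A (x (k+1) - x k)‖^2 := hq
    rw [hfid, hcdef]
    nlinarith [hk, hr, hamgm]
  -- summability of step sizes, boundedness of f
  set E : ℝ := ∑' k, ‖ε k‖^2 with hE
  have hpartE : ∀ n, ∑ k ∈ Finset.range n, ‖ε k‖^2 ≤ E :=
    fun n => Summable.sum_le_tsum (Finset.range n) (fun k _ => sq_nonneg _) hsum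
  set F : ℝ := f (x 0) + (1/(2*c)) * E with hF
  have hsumle : ∀ n, f (x n) + (c/2) * ∑ k ∈ Finset.range n, ‖x (k+1) - x k‖^2
      ≤ f (x 0) + (1/(2*c)) * ∑ k ∈ Finset.range n, ‖ε k‖^2 := by
    intro n
    induction n with
    | zero => simp
    | succ n ih =>
      rw [Finset.sum_range_succ, Finset.sum_range_succ]
      have := hdec n
      linarith
  have hfnonneg : ∀ n, 0 ≤ f (x n) := fun n => sq_nonneg _
  have h2cpos : (0:ℝ) < 1/(2*c) := by positivity
  have hfb : ∀ n, f (x n) ≤ F := by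
    intro n
    have h1 := hsumle n
    have h2 : (1/(2*c)) * ∑ k ∈ Finset.range n, ‖ε k‖^2 ≤ (1/(2*c)) * E :=
      mul_le_mul_of_nonneg_left (hpartE n) h2cpos.le
    have h3 : 0 ≤ (c/2) * ∑ k ∈ Finset.range n, ‖x (k+1) - x k‖^2 := by
      have : 0 ≤ ∑ k ∈ Finset.range n, ‖x (k+1) - x k‖^2 :=
        Finset.sum_nonneg fun k _ => sq_nonneg _
      positivity
    rw [hF]
    linarith
  have hsd : Summable (fun k => ‖x (k+1) - x k‖^2) := by
    refine summable_of_sum_range_le (c := F / (c/2)) (fun k => sq_nonneg _) (fun n => ?_)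
    rw [le_div_iff₀ (by linarith : (0:ℝ) < c/2)]
    have h1 := hsumle n
    have h2 : (1/(2*c)) * ∑ k ∈ Finset.range n, ‖ε k‖^2 ≤ (1/(2*c)) * E :=
      mul_le_mul_of_nonneg_left (hpartE n) h2cpos.le
    have h3 := hfnonneg n
    rw [hF]
    nlinarith
  have hnormd : Tendsto (fun k => ‖x (k+1) - x k‖) atTop (nhds 0) := by
    have h1 : Tendsto (fun k => ‖x (k+1) - x k‖^2) atTop (nhds 0) := hsd.tendsto_atTop_zero
    have h2 : Tendsto (fun k => Real.sqrt (‖x (k+1) - x k‖^2)) atTop (nhds (Real.sqrt 0)) :=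
      (Real.continuous_sqrt.tendsto 0).comp h1
    simpa [Real.sqrt_sq (norm_nonneg _)] using h2
  have hstep : Tendsto (fun k => dist (x (k+1)) (x k)) atTop (nhds 0) := by
    simpa [dist_eq_norm] using hnormd
  have hdiffv : Tendsto (fun k => x (k+1) - x k) atTop (nhds 0) :=
    tendsto_zero_iff_norm_tendsto_zero.2 hnormd
  -- boundedness of the iterates
  obtain ⟨α, hα, hlow⟩ := sparse_lower A hspark
  set R : ℝ := (Real.sqrt F + ‖b‖) / α with hR
  have hbd : ∀ k, ‖x k‖ ≤ R := by
    intro k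
    have h1 : α * ‖x k‖ ≤ ‖Matrix.toEuclideanLin A (x k)‖ := hlow _ (hxs k)
    have h2 : ‖Matrix.toEuclideanLin A (x k)‖
        ≤ ‖Matrix.toEuclideanLin A (x k) - b‖ + ‖b‖ := by
      calc ‖Matrix.toEuclideanLin A (x k)‖
          = ‖(Matrix.toEuclideanLin A (x k) - b) + b‖ := by rw [sub_add_cancel]
        _ ≤ ‖Matrix.toEuclideanLin A (x k) - b‖ + ‖b‖ := norm_add_le _ _
    have h3 : ‖Matrix.toEuclideanLin A (x k) - b‖ ≤ Real.sqrt F := by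
      have : ‖Matrix.toEuclideanLin A (x k) - b‖
          = Real.sqrt (f (x k)) := by
        rw [hf]
        exact (Real.sqrt_sq (norm_nonneg _)).symm
      rw [this]
      exact Real.sqrt_le_sqrt (hfb k)
    rw [hR, le_div_iff₀ hα]
    calc ‖x k‖ * α = α * ‖x k‖ := mul_comm _ _
      _ ≤ Real.sqrt F + ‖b‖ := by linarith
  -- errors tend to zero
  have hepsto : Tendsto ε atTop (nhds 0) := by
    rw [tendsto_zero_iff_norm_tendsto_zero]
    have h1 : Tendsto (fun k => ‖ε k‖^2) atTop (nhds 0) := hsum.tendsto_atTop_zero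
    have h2 : Tendsto (fun k => Real.sqrt (‖ε k‖^2)) atTop (nhds (Real.sqrt 0)) :=
      (Real.continuous_sqrt.tendsto 0).comp h1
    simpa [Real.sqrt_sq (norm_nonneg _)] using h2
  -- continuity of g
  have hgcont : Continuous g := by
    have c1 : Continuous fun y : EN N => Matrix.toEuclideanLin A y :=
      (Matrix.toEuclideanLin A).continuous_of_finiteDimensional
    have c2 : Continuous fun z : EuclideanSpace ℝ (Fin M) => Matrix.toEuclideanLin Aᵀ z :=
      (Matrix.toEuclideanLin Aᵀ).continuous_of_finiteDimensional
    exact ((c2.comp (c1.sub continuous_const)).const_smul (2:ℝ))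
  -- every accumulation point is an HT fixed point
  have hacc : ∀ y ∈ ACCpts x, IsHT K (y - (1/L) • g y) y := by
    intro y hy
    obtain ⟨φ, hφ, hconv⟩ := hy
    have hφto : Tendsto φ atTop atTop := hφ.tendsto_atTop
    have hconv1 : Tendsto (fun n => x (φ n + 1)) atTop (nhds y) := by
      have := hconv.add (hdiffv.comp hφto)
      simpa using this
    have hz : Tendsto (fun n => x (φ n) - (1/L) • (g (x (φ n)) + ε (φ n))) atTop
        (nhds (y - (1/L) • g y)) := by
      have h1 : Tendsto (fun n => g (x (φ n)) + ε (φ n)) atTop (nhds (g y + 0)) :=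
        (((hgcont.tendsto y).comp hconv)).add (hepsto.comp hφto)
      rw [add_zero] at h1
      exact hconv.sub (h1.const_smul (1/L))
    constructor
    · exact (sparse_isClosed K).mem_of_tendsto hconv
        (Eventually.of_forall fun n => hxs (φ n))
    · intro v hv
      have hn : ∀ n, ‖x (φ n + 1) - (x (φ n) - (1/L) • (g (x (φ n)) + ε (φ n)))‖
          ≤ ‖v - (x (φ n) - (1/L) • (g (x (φ n)) + ε (φ n)))‖ :=
        fun n => (hit (φ n)).2 v hv
      exact le_of_tendsto_of_tendsto' ((hconv1.sub hz).norm)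
        ((tendsto_const_nhds.sub hz).norm) hn
  -- accumulation points lie in the finite stationary set
  have haccsub : ACCpts x ⊆ {y : EN N | sparse K y ∧ ∀ i, y i ≠ 0 →
      (Matrix.toEuclideanLin Aᵀ) ((Matrix.toEuclideanLin A) y - b) i = 0} := by
    intro y hy
    refine ⟨(hacc y hy).1, fun i hi => ?_⟩
    have h1 : y i = (y - (1/L) • g y) i := ht_fixed_coord (hacc y hy) hi
    have h2 : (y - (1/L) • g y) i = y i - (1/L) * (g y) i := by
      simp [PiLp.sub_apply, PiLp.smul_apply]
    have h3 : (1/L) * (g y) i = 0 := by rw [h2] at h1; linarith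
    have h4 : (g y) i = 0 := by
      have := one_div_ne_zero (ne_of_gt hL0)
      field_simp at h3
      simpa using h3
    have h5 : (g y) i = 2 * ((Matrix.toEuclideanLin Aᵀ) ((Matrix.toEuclideanLin A) y - b)) i := by
      simp [hg, PiLp.smul_apply]
    rw [h5] at h4
    linarith
  have hfinacc : (ACCpts x).Finite := (stat_finite A b hspark).subset haccsub
  obtain ⟨a, haacc, htend⟩ := tendsto_of_acc_finite hbd hstep hfinacc
  refine ⟨a, htend, ?_⟩
  rw [hgr]
  exact hacc a haacc

end IHTAux

open Matrix in
/-- Convergence of inexact IHT for compressed sensing: with `f(x) = ‖Ax - b‖²`,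
`spark(A) > K`, `L > 2λ_max(AᵀA)`, and square-summable errors, the iterates
converge to an `L`-stationary point. -/
theorem stmt10 {M N : ℕ} (A : Matrix (Fin M) (Fin N) ℝ) (b : EuclideanSpace ℝ (Fin M))
    (K : ℕ)
    (hspark : ∀ S : Finset (Fin N), S.card ≤ K →
      LinearIndependent ℝ (fun j : S => Aᵀ (j : Fin N)))
    (lam L : ℝ)
    (hlam : IsGreatest
      {μ : ℝ | Module.End.HasEigenvalue (Matrix.toEuclideanLin (Aᵀ * A)) μ} lam)
    (hL : 2 * lam < L)
    (x ε : ℕ → EuclideanSpace ℝ (Fin N))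
    (h0 : sparse K (x 0))
    (hit : ∀ k, IsHT K
      (x k - (1 / L) •
        (gradient (fun y => ‖Matrix.toEuclideanLin A y - b‖ ^ 2) (x k) + ε k))
      (x (k + 1)))
    (hsum : Summable fun k => ‖ε k‖ ^ 2) :
    ∃ xstar : EuclideanSpace ℝ (Fin N),
      Filter.Tendsto x Filter.atTop (nhds xstar) ∧
      IsHT K (xstar - (1 / L) •
        gradient (fun y => ‖Matrix.toEuclideanLin A y - b‖ ^ 2) xstar) xstar :=
  IHTAux.main A b K hspark lam L hlam hL x ε h0 hit hsum
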